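/- Suppose F is entire with indicator value h_F(0) = limsup_{r→∞} log|F(r)|/r = 2, and suppose lim_{r→∞} (log|F(r)|)/r does NOT exist even after excluding any set of relative measure zero. If u is entire with sup_{Re z ≥ 0} |u(z)| < ∞ and u(r) → 0 (r → +∞ real), then F + u also fails to have the restricted limit lim*_{r→∞} log|(F+u)(r)|/r existing and equal to 2. -/

import Mathlib

open Filter MeasureTheory Complex

/-- `E ⊆ (0,∞)` has relative measure zero: `λ(E ∩ (0,r))/r → 0` as `r → ∞`. -/
def RelMeasureZero (E : Set ℝ) : Prop :=
  Filter.Tendsto (fun r : ℝ => (MeasureTheory.volume (E ∩ Set.Ioo 0 r)).toReal / r)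
    Filter.atTop (nhds 0)

private lemma div_le_div_of_nonneg_right' {a b c : ℝ} (h : a ≤ b) (hc : 0 < c) :
    a / c ≤ b / c := by
  gcongr

theorem irregular_growth_preserved (F u : ℂ → ℂ)
    (hF : Differentiable ℂ F) (hu : Differentiable ℂ u)
    (hind : Filter.limsup (fun r : ℝ => Real.log (‖F r‖) / r)
      Filter.atTop = 2)
    (hbad : ¬ ∃ E : Set ℝ, MeasurableSet E ∧ RelMeasureZero E ∧ ∃ L : ℝ,
      Filter.Tendsto (fun r : ℝ => Real.log (‖F r‖) / r)
        (Filter.atTop ⊓ Filter.principal Eᶜ) (nhds L))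
    (hubdd : ∃ M : ℝ, ∀ z : ℂ, 0 ≤ z.re → ‖u z‖ ≤ M)
    (hu0 : Filter.Tendsto (fun r : ℝ => u r) Filter.atTop (nhds 0)) :
    ¬ ∃ E : Set ℝ, MeasurableSet E ∧ RelMeasureZero E ∧
      Filter.Tendsto (fun r : ℝ => Real.log (‖F r + u r‖) / r)
        (Filter.atTop ⊓ Filter.principal Eᶜ) (nhds 2) := by
  rintro ⟨E, hE, hrel, htend⟩
  apply hbad
  refine ⟨E, hE, hrel, 2, ?_⟩
  set l := Filter.atTop ⊓ Filter.principal Eᶜ with hl_def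
  have hl : l ≤ Filter.atTop := inf_le_left
  have h1 : ∀ᶠ r : ℝ in l, (1 : ℝ) ≤ r := (Filter.eventually_ge_atTop 1).filter_mono hl
  have h2 : ∀ᶠ r : ℝ in l, 1 ≤ Real.log (‖F r + u r‖) / r :=
    htend.eventually (eventually_ge_nhds (by norm_num : (1:ℝ) < 2))
  have h3 : ∀ᶠ r : ℝ in l, ‖u r‖ ≤ 1 / 2 := by
    have : Filter.Tendsto (fun r : ℝ => ‖u r‖) Filter.atTop (nhds 0) := by
      simpa using hu0.norm
    exact (this.eventually (eventually_le_nhds (by norm_num : (0:ℝ) < 1/2))).filter_mono hl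
  -- key bound: |log|F r|/r - log|F r + u r|/r| ≤ log 2 / r eventually
  have key : ∀ᶠ r : ℝ in l,
      Real.log (‖F r + u r‖) / r - Real.log 2 / r
        ≤ Real.log (‖F r‖) / r ∧
      Real.log (‖F r‖) / r
        ≤ Real.log (‖F r + u r‖) / r + Real.log 2 / r := by
    filter_upwards [h1, h2, h3] with r hr1 hr2 hr3
    have hrpos : (0:ℝ) < r := lt_of_lt_of_le zero_lt_one hr1
    set g := ‖F r + u r‖ with hg
    have hlogg : r ≤ Real.log g := by
      have := (le_div_iff₀ hrpos).mp hr2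
      linarith
    have hg1 : (1:ℝ) ≤ g := by
      by_contra h
      push_neg at h
      have : Real.log g ≤ 0 := Real.log_nonpos (norm_nonneg _) h.le
      linarith
    have hgpos : (0:ℝ) < g := lt_of_lt_of_le zero_lt_one hg1
    have htri1 : g ≤ ‖F r‖ + ‖u r‖ :=
      norm_add_le (F r) (u r)
    have htri2 : ‖F r‖ ≤ g + ‖u r‖ := by
      have := norm_add_le (F r + u r) (-(u r))
      simpa using this
    have hFlow : g / 2 ≤ ‖F r‖ := by linarith
    have hFhigh : ‖F r‖ ≤ 2 * g := by linarith
    have hloglow : Real.log g - Real.log 2 ≤ Real.log (‖F r‖) := by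
      have h' : Real.log (g / 2) ≤ Real.log (‖F r‖) :=
        Real.log_le_log (by positivity) hFlow
      rwa [Real.log_div (ne_of_gt hgpos) (by norm_num)] at h'
    have hloghigh : Real.log (‖F r‖) ≤ Real.log g + Real.log 2 := by
      have h' : Real.log (‖F r‖) ≤ Real.log (2 * g) :=
        Real.log_le_log (lt_of_lt_of_le (by positivity) hFlow) hFhigh
      rw [Real.log_mul (by norm_num) (ne_of_gt hgpos)] at h'
      linarith
    constructor
    · rw [← sub_div]
      exact div_le_div_of_nonneg_right' hloglow hrpos
    · rw [← add_div]
      exact div_le_div_of_nonneg_right' hloghigh hrpos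
  have hlog2 : Filter.Tendsto (fun r : ℝ => Real.log 2 / r) l (nhds 0) :=
    (tendsto_const_nhds.div_atTop (tendsto_id.mono_left hl))
  have hlow : Filter.Tendsto
      (fun r : ℝ => Real.log (‖F r + u r‖) / r - Real.log 2 / r) l (nhds 2) := by
    simpa using htend.sub hlog2
  have hhigh : Filter.Tendsto
      (fun r : ℝ => Real.log (‖F r + u r‖) / r + Real.log 2 / r) l (nhds 2) := by
    simpa using htend.add hlog2
  exact tendsto_of_tendsto_of_tendsto_of_le_of_le' hlow hhigh
    (key.mono fun r h => h.1) (key.mono fun r h => h.2)
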